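/- If the h^m value of a formula ψ is ∞ (no finite regression sequence from ψ reaches a formula satisfied by the initial state), then ψ is unreachable: no state reachable from s₀ satisfies ψ. -/
import Mathlib


/-- Regression sequences: `RegSeq Rg ψ n ψ'` means `ψ'` is obtained from `ψ` by `n`
regression steps. -/
inductive RegSeq {Φ : Type*} (Rg : Φ → Φ → Prop) : Φ → ℕ → Φ → Prop
  | refl (ψ : Φ) : RegSeq Rg ψ 0 ψ
  | step {ψ ψ' ψ'' : Φ} {n : ℕ} : Rg ψ ψ' → RegSeq Rg ψ' n ψ'' → RegSeq Rg ψ (n + 1) ψ''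

/-- The regression-based distance: the least number of regression steps leading from `ψ`
to a formula satisfied by the initial state `s0` (`⊤` if there is none). -/
noncomputable def regH {S Φ : Type*} (Rg : Φ → Φ → Prop) (sat : S → Φ → Prop)
    (s0 : S) (ψ : Φ) : ℕ∞ :=
  sInf {m : ℕ∞ | ∃ (n : ℕ) (ψ' : Φ), RegSeq Rg ψ n ψ' ∧ sat s0 ψ' ∧ m = (n : ℕ∞)}

lemma RegSeq.snoc {Φ : Type*} {Rg : Φ → Φ → Prop} {ψ ψ' ψ'' : Φ} {n : ℕ}
    (h : RegSeq Rg ψ n ψ') (h' : Rg ψ' ψ'') : RegSeq Rg ψ (n + 1) ψ'' := by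
  induction h with
  | refl => exact RegSeq.step h' (RegSeq.refl _)
  | step r _ ih => exact RegSeq.step r (ih h')

lemma reach_regseq {S Φ : Type*} {step : S → S → Prop} {sat : S → Φ → Prop}
    {Rg : Φ → Φ → Prop}
    (hreg : ∀ s s' ψ, step s s' → sat s' ψ → ∃ ψ', Rg ψ ψ' ∧ sat s ψ')
    {s t : S} (h : Relation.ReflTransGen step s t) :
    ∀ ψ, sat t ψ → ∃ n ψ', RegSeq Rg ψ n ψ' ∧ sat s ψ' := by
  induction h using Relation.ReflTransGen.head_induction_on with
  | refl => exact fun ψ hs => ⟨0, ψ, RegSeq.refl ψ, hs⟩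
  | head hst _ ih =>
    intro ψ hs
    obtain ⟨n, ψ', hseq, hsat⟩ := ih ψ hs
    obtain ⟨ψ'', hr, hs''⟩ := hreg _ _ ψ' hst hsat
    exact ⟨n + 1, ψ'', hseq.snoc hr, hs''⟩

/-- Unreachability soundness: if `regH ψ = ∞` (no finite regression sequence from `ψ`
reaches a formula satisfied by `s0`), then no state reachable from `s0` satisfies `ψ`.
The regression relation is assumed sound: for every transition `s → s'` and formula `ψ`
with `s' ⊨ ψ`, some regression `ψ'` of `ψ` satisfies `s ⊨ ψ'`. -/
theorem stmt_13 {S Φ : Type*} (step : S → S → Prop) (s0 : S)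
    (sat : S → Φ → Prop) (Rg : Φ → Φ → Prop)
    (hreg : ∀ s s' ψ, step s s' → sat s' ψ → ∃ ψ', Rg ψ ψ' ∧ sat s ψ')
    (ψ : Φ) (hinf : regH Rg sat s0 ψ = ⊤) :
    ∀ s, Relation.ReflTransGen step s0 s → ¬ sat s ψ := by
  intro s hs hsat
  obtain ⟨n, ψ', hseq, hsat0⟩ := reach_regseq hreg hs ψ hsat
  have hle : regH Rg sat s0 ψ ≤ (n : ℕ∞) :=
    sInf_le ⟨n, ψ', hseq, hsat0, rfl⟩
  rw [hinf] at hle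
  exact absurd (top_le_iff.mp hle).symm (by simp)
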